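/- The Euler integral of the symmetric two-centre problem is conserved: if x, y : ℝ → ℝ³ are differentiable curves with x(t) ∉ {−x₀, x₀} for all t, satisfying Hamilton's equations ẋ(t) = y(t) and ẏ(t) = −m₊·(x(t)+x₀)/|x(t)+x₀|³ − m₋·(x(t)−x₀)/|x(t)−x₀|³, then the function t ↦ |x(t) × y(t)|² + (x₀ · y(t))² + 2·(x(t) · x₀)·( m₊/|x(t)+x₀| − m₋/|x(t)−x₀| ) is constant. -/

import Mathlib

open scoped Matrix

/-- Euclidean norm on `Fin 3 → ℝ`. -/
noncomputable def norm3 (v : Fin 3 → ℝ) : ℝ := Real.sqrt (v ⬝ᵥ v)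

/-- The Euler integral of the symmetric two-centre problem with masses `mp`, `mm`
placed at `-x₀`, `x₀`:
`𝒢_sim = |x × y|² + (x₀ · y)² + 2 (x · x₀)(mp/|x+x₀| − mm/|x−x₀|)`. -/
noncomputable def eulerSym (x₀ : Fin 3 → ℝ) (mp mm : ℝ) (x y : Fin 3 → ℝ) : ℝ :=
  norm3 (x ⨯₃ y) ^ 2 + (x₀ ⬝ᵥ y) ^ 2
    + 2 * (x ⬝ᵥ x₀) * (mp / norm3 (x + x₀) - mm / norm3 (x - x₀))


lemma dot_self_nonneg (v : Fin 3 → ℝ) : 0 ≤ v ⬝ᵥ v :=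
  Finset.sum_nonneg fun i _ => mul_self_nonneg _

lemma norm3_sq (v : Fin 3 → ℝ) : norm3 v ^ 2 = v ⬝ᵥ v :=
  Real.sq_sqrt (dot_self_nonneg v)

lemma hasDerivAt_dot3 {u v : ℝ → Fin 3 → ℝ} {u' v' : Fin 3 → ℝ} {t : ℝ}
    (hu : HasDerivAt u u' t) (hv : HasDerivAt v v' t) :
    HasDerivAt (fun s => u s ⬝ᵥ v s) (u' ⬝ᵥ v t + u t ⬝ᵥ v') t := by
  have hu' := hasDerivAt_pi.1 hu
  have hv' := hasDerivAt_pi.1 hv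
  have h : HasDerivAt (fun s => ∑ i : Fin 3, u s i * v s i)
      (∑ i : Fin 3, (u' i * v t i + u t i * v' i)) t :=
    HasDerivAt.fun_sum fun i _ => (hu' i).mul (hv' i)
  simpa [dotProduct, Finset.sum_add_distrib] using h

lemma hasDerivAt_cross3 {u v : ℝ → Fin 3 → ℝ} {u' v' : Fin 3 → ℝ} {t : ℝ}
    (hu : HasDerivAt u u' t) (hv : HasDerivAt v v' t) :
    HasDerivAt (fun s => u s ⨯₃ v s) (u' ⨯₃ v t + u t ⨯₃ v') t := by
  have hu' := hasDerivAt_pi.1 hu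
  have hv' := hasDerivAt_pi.1 hv
  rw [hasDerivAt_pi]
  intro i
  fin_cases i <;>
    · simp [cross_apply]
      first
      | exact ((((hu' 1).mul (hv' 2)).sub ((hu' 2).mul (hv' 1)))).congr_deriv (by ring)
      | exact ((((hu' 2).mul (hv' 0)).sub ((hu' 0).mul (hv' 2)))).congr_deriv (by ring)
      | exact ((((hu' 0).mul (hv' 1)).sub ((hu' 1).mul (hv' 0)))).congr_deriv (by ring)

lemma hasDerivAt_norm3 {v : ℝ → Fin 3 → ℝ} {v' : Fin 3 → ℝ} {t : ℝ}
    (hv : HasDerivAt v v' t) (hne : v t ≠ 0) :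
    HasDerivAt (fun s => norm3 (v s)) ((v t ⬝ᵥ v') / norm3 (v t)) t := by
  have hq : (v t) ⬝ᵥ (v t) ≠ 0 := fun h => hne (dotProduct_self_eq_zero.1 h)
  have hqpos : 0 < (v t) ⬝ᵥ (v t) := lt_of_le_of_ne (dot_self_nonneg _) (Ne.symm hq)
  have hs : Real.sqrt ((v t) ⬝ᵥ (v t)) ≠ 0 := ne_of_gt (Real.sqrt_pos.2 hqpos)
  have h1 := hasDerivAt_dot3 hv hv
  have h2 := (Real.hasDerivAt_sqrt hq).comp t h1
  convert h2 using 1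
  all_goals try rfl
  unfold norm3
  rw [dotProduct_comm v' (v t)]
  field_simp
  ring

/-- the Euler integral of the symmetric two-centre problem is conserved
along solutions of the Hamiltonian system of
`h_sim(y,x) = |y|²/2 − mp/|x+x₀| − mm/|x−x₀|`, i.e. `ẋ = y`,
`ẏ = −mp (x+x₀)/|x+x₀|³ − mm (x−x₀)/|x−x₀|³`. -/
theorem eulerSym_conserved (x₀ : Fin 3 → ℝ) (mp mm : ℝ)
    (x y : ℝ → Fin 3 → ℝ)
    (hcol : ∀ t, x t ≠ -x₀ ∧ x t ≠ x₀)
    (hx : ∀ t, HasDerivAt x (y t) t)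
    (hy : ∀ t, HasDerivAt y
      (-((mp / norm3 (x t + x₀) ^ 3) • (x t + x₀))
        - (mm / norm3 (x t - x₀) ^ 3) • (x t - x₀)) t) :
    ∀ s t : ℝ, eulerSym x₀ mp mm (x s) (y s) = eulerSym x₀ mp mm (x t) (y t) := by
  have key : ∀ t : ℝ, HasDerivAt (fun s => eulerSym x₀ mp mm (x s) (y s)) 0 t := by
    intro t
    have hP : x t + x₀ ≠ 0 := by
      intro h; exact (hcol t).1 (eq_neg_of_add_eq_zero_left h)
    have hQ : x t - x₀ ≠ 0 := by
      intro h; exact (hcol t).2 (sub_eq_zero.1 h)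
    have hqp : (x t + x₀) ⬝ᵥ (x t + x₀) ≠ 0 :=
      fun h => hP (dotProduct_self_eq_zero.1 h)
    have hqm : (x t - x₀) ⬝ᵥ (x t - x₀) ≠ 0 :=
      fun h => hQ (dotProduct_self_eq_zero.1 h)
    have rp_pos : 0 < norm3 (x t + x₀) :=
      Real.sqrt_pos.2 (lt_of_le_of_ne (dot_self_nonneg _) (Ne.symm hqp))
    have rm_pos : 0 < norm3 (x t - x₀) :=
      Real.sqrt_pos.2 (lt_of_le_of_ne (dot_self_nonneg _) (Ne.symm hqm))
    have rp_ne : norm3 (x t + x₀) ≠ 0 := ne_of_gt rp_pos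
    have rm_ne : norm3 (x t - x₀) ≠ 0 := ne_of_gt rm_pos
    have hrp2 : norm3 (x t + x₀) ^ 2 = (x t + x₀) ⬝ᵥ (x t + x₀) := norm3_sq _
    have hrm2 : norm3 (x t - x₀) ^ 2 = (x t - x₀) ⬝ᵥ (x t - x₀) := norm3_sq _
    set Y' := (-((mp / norm3 (x t + x₀) ^ 3) • (x t + x₀))
        - (mm / norm3 (x t - x₀) ^ 3) • (x t - x₀)) with hY'
    -- piece 1 : |x × y|²
    have hc := hasDerivAt_cross3 (hx t) (hy t)
    have h1 : HasDerivAt (fun s => norm3 (x s ⨯₃ y s) ^ 2)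
        ((y t ⨯₃ y t + x t ⨯₃ Y') ⬝ᵥ (x t ⨯₃ y t)
          + (x t ⨯₃ y t) ⬝ᵥ (y t ⨯₃ y t + x t ⨯₃ Y')) t := by
      have := hasDerivAt_dot3 hc hc
      have feq : (fun s => norm3 (x s ⨯₃ y s) ^ 2)
          = fun s => (x s ⨯₃ y s) ⬝ᵥ (x s ⨯₃ y s) := funext fun s => norm3_sq _
      rw [feq]; exact this
    -- piece 2 : (x₀ · y)²
    have h2 : HasDerivAt (fun s => (x₀ ⬝ᵥ y s) ^ 2)
        (2 * (x₀ ⬝ᵥ y t) * ((0 : Fin 3 → ℝ) ⬝ᵥ y t + x₀ ⬝ᵥ Y')) t := by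
      have hd := hasDerivAt_dot3 (hasDerivAt_const (𝕜 := ℝ) t x₀) (hy t)
      have h := hd.pow 2
      convert h using 1
      all_goals try rfl
      push_cast
      ring
    -- piece 3
    have hrp : HasDerivAt (fun s => norm3 (x s + x₀))
        (((x t + x₀) ⬝ᵥ y t) / norm3 (x t + x₀)) t :=
      hasDerivAt_norm3 ((hx t).add_const x₀) hP
    have hrm : HasDerivAt (fun s => norm3 (x s - x₀))
        (((x t - x₀) ⬝ᵥ y t) / norm3 (x t - x₀)) t :=
      hasDerivAt_norm3 ((hx t).sub_const x₀) hQ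
    have hip : HasDerivAt (fun s => mp / norm3 (x s + x₀))
        (-(mp / norm3 (x t + x₀) ^ 3 * ((x t + x₀) ⬝ᵥ y t))) t := by
      have h := (hasDerivAt_const (𝕜 := ℝ) t mp).div hrp rp_ne
      convert h using 1
      all_goals try rfl
      field_simp
      try ring
      try exact Or.inl trivial
    have him : HasDerivAt (fun s => mm / norm3 (x s - x₀))
        (-(mm / norm3 (x t - x₀) ^ 3 * ((x t - x₀) ⬝ᵥ y t))) t := by
      have h := (hasDerivAt_const (𝕜 := ℝ) t mm).div hrm rm_ne
      convert h using 1
      all_goals try rfl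
      field_simp
      try ring
      try exact Or.inl trivial
    have hdx0 : HasDerivAt (fun s => x s ⬝ᵥ x₀) (y t ⬝ᵥ x₀ + x t ⬝ᵥ (0 : Fin 3 → ℝ)) t :=
      hasDerivAt_dot3 (hx t) (hasDerivAt_const (𝕜 := ℝ) t x₀)
    have h3 : HasDerivAt
        (fun s => 2 * (x s ⬝ᵥ x₀) * (mp / norm3 (x s + x₀) - mm / norm3 (x s - x₀)))
        (2 * (y t ⬝ᵥ x₀ + x t ⬝ᵥ (0 : Fin 3 → ℝ))
            * (mp / norm3 (x t + x₀) - mm / norm3 (x t - x₀))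
          + 2 * (x t ⬝ᵥ x₀)
            * (-(mp / norm3 (x t + x₀) ^ 3 * ((x t + x₀) ⬝ᵥ y t))
               - -(mm / norm3 (x t - x₀) ^ 3 * ((x t - x₀) ⬝ᵥ y t)))) t := by
      have := (hdx0.const_mul 2).mul (hip.sub him)
      convert this using 1
      all_goals try rfl
      try ring
    have htot := (h1.add h2).add h3
    have hzero :
        (y t ⨯₃ y t + x t ⨯₃ Y') ⬝ᵥ (x t ⨯₃ y t)
          + (x t ⨯₃ y t) ⬝ᵥ (y t ⨯₃ y t + x t ⨯₃ Y')
        + 2 * (x₀ ⬝ᵥ y t) * ((0 : Fin 3 → ℝ) ⬝ᵥ y t + x₀ ⬝ᵥ Y')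
        + (2 * (y t ⬝ᵥ x₀ + x t ⬝ᵥ (0 : Fin 3 → ℝ))
            * (mp / norm3 (x t + x₀) - mm / norm3 (x t - x₀))
          + 2 * (x t ⬝ᵥ x₀)
            * (-(mp / norm3 (x t + x₀) ^ 3 * ((x t + x₀) ⬝ᵥ y t))
               - -(mm / norm3 (x t - x₀) ^ 3 * ((x t - x₀) ⬝ᵥ y t)))) = 0 := by
      have ep : mp / norm3 (x t + x₀)
          = mp / norm3 (x t + x₀) ^ 3 * ((x t + x₀) ⬝ᵥ (x t + x₀)) := by
        rw [← hrp2]; field_simp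
      have em : mm / norm3 (x t - x₀)
          = mm / norm3 (x t - x₀) ^ 3 * ((x t - x₀) ⬝ᵥ (x t - x₀)) := by
        rw [← hrm2]; field_simp
      rw [ep, em, hY']
      generalize mp / norm3 (x t + x₀) ^ 3 = cp
      generalize mm / norm3 (x t - x₀) ^ 3 = cm
      simp only [cross_apply, dotProduct, Fin.sum_univ_three, Pi.add_apply,
        Pi.sub_apply, Pi.neg_apply, Pi.smul_apply, smul_eq_mul, Pi.zero_apply,
        Matrix.cons_val_zero, Matrix.cons_val_one, Matrix.head_cons, Matrix.cons_val_two,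
        Matrix.tail_cons]
      ring
    rw [show (0 : ℝ) = (y t ⨯₃ y t + x t ⨯₃ Y') ⬝ᵥ (x t ⨯₃ y t)
          + (x t ⨯₃ y t) ⬝ᵥ (y t ⨯₃ y t + x t ⨯₃ Y')
        + 2 * (x₀ ⬝ᵥ y t) * ((0 : Fin 3 → ℝ) ⬝ᵥ y t + x₀ ⬝ᵥ Y')
        + (2 * (y t ⬝ᵥ x₀ + x t ⬝ᵥ (0 : Fin 3 → ℝ))
            * (mp / norm3 (x t + x₀) - mm / norm3 (x t - x₀))
          + 2 * (x t ⬝ᵥ x₀)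
            * (-(mp / norm3 (x t + x₀) ^ 3 * ((x t + x₀) ⬝ᵥ y t))
               - -(mm / norm3 (x t - x₀) ^ 3 * ((x t - x₀) ⬝ᵥ y t)))) from hzero.symm]
    exact htot
  have hdiff : Differentiable ℝ (fun s => eulerSym x₀ mp mm (x s) (y s)) :=
    fun t => (key t).differentiableAt
  have hderiv : ∀ t, deriv (fun s => eulerSym x₀ mp mm (x s) (y s)) t = 0 :=
    fun t => (key t).deriv
  intro s t
  exact is_const_of_deriv_eq_zero hdiff hderiv s t
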